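/- Let U ⊆ ℝ² be open and F : U → ℂ be twice continuously differentiable. Then the pair of real functions (K, κ) defined by K = |α|·Re(α), κ = |α|·Im(α) with α = e^F satisfies the system (K² + κ²)^{1/4}·Δ((1/4)·ln(K²+κ²)) = 2K and (K²+κ²)^{1/4}·Δ(arctan(κ/K)) = 2κ on the set where Re(α) ≠ 0, provided ΔF = 2e^F. -/

import Mathlib

open Complex

noncomputable def pdu {E : Type*} [NormedAddCommGroup E] [NormedSpace ℝ E]
    (f : ℝ × ℝ → E) (p : ℝ × ℝ) : E := fderiv ℝ f p (1, 0)

noncomputable def pdv {E : Type*} [NormedAddCommGroup E] [NormedSpace ℝ E]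
    (f : ℝ × ℝ → E) (p : ℝ × ℝ) : E := fderiv ℝ f p (0, 1)

noncomputable def lap {E : Type*} [NormedAddCommGroup E] [NormedSpace ℝ E]
    (f : ℝ × ℝ → E) (p : ℝ × ℝ) : E := pdu (pdu f) p + pdv (pdv f) p

open Filter Topology

private lemma fderiv_clm' {E G : Type*} [NormedAddCommGroup E] [NormedSpace ℝ E]
    [NormedAddCommGroup G] [NormedSpace ℝ G] (L : E →L[ℝ] G) {g : ℝ × ℝ → E} {q : ℝ × ℝ}
    (hg : DifferentiableAt ℝ g q) :
    fderiv ℝ (fun x => L (g x)) q = L.comp (fderiv ℝ g q) :=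
  (L.hasFDerivAt.comp q hg.hasFDerivAt).fderiv

private lemma lap_clm (L : ℂ →L[ℝ] ℝ) (g : ℝ × ℝ → ℂ) (p : ℝ × ℝ)
    (h1 : ∀ᶠ q in 𝓝 p, DifferentiableAt ℝ g q)
    (h2 : DifferentiableAt ℝ (fderiv ℝ g) p) :
    lap (fun q => L (g q)) p = L (lap g p) := by
  have key : ∀ v : ℝ × ℝ,
      fderiv ℝ (fun q => fderiv ℝ (fun x => L (g x)) q v) p v
        = L (fderiv ℝ (fun q => fderiv ℝ g q v) p v) := by
    intro v
    have e1 : (fun q => fderiv ℝ (fun x => L (g x)) q v)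
        =ᶠ[𝓝 p] (fun q => (L.comp (ContinuousLinearMap.apply ℝ ℂ v)) (fderiv ℝ g q)) :=
      h1.mono fun q hq => by
        show fderiv ℝ (fun x => L (g x)) q v
            = (L.comp (ContinuousLinearMap.apply ℝ ℂ v)) (fderiv ℝ g q)
        rw [fderiv_clm' L hq]; rfl
    rw [e1.fderiv_eq, fderiv_clm' _ h2]
    have e2 : (fun q => fderiv ℝ g q v)
        = fun q => (ContinuousLinearMap.apply ℝ ℂ v) (fderiv ℝ g q) := rfl
    rw [e2, fderiv_clm' _ h2]
    rfl
  show fderiv ℝ (fun q => fderiv ℝ (fun x => L (g x)) q (1, 0)) p (1, 0)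
      + fderiv ℝ (fun q => fderiv ℝ (fun x => L (g x)) q (0, 1)) p (0, 1)
      = L (fderiv ℝ (fun q => fderiv ℝ g q (1, 0)) p (1, 0)
        + fderiv ℝ (fun q => fderiv ℝ g q (0, 1)) p (0, 1))
  rw [map_add, key (1, 0), key (0, 1)]

private lemma lap_congr {f g : ℝ × ℝ → ℝ} {p : ℝ × ℝ} (h : f =ᶠ[𝓝 p] g) :
    lap f p = lap g p := by
  have h1 : ∀ᶠ q in 𝓝 p, fderiv ℝ f q = fderiv ℝ g q := by
    filter_upwards [eventually_eventually_nhds.mpr h] with q hq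
    exact Filter.EventuallyEq.fderiv_eq hq
  have h2 : ∀ v : ℝ × ℝ, (fun q => fderiv ℝ f q v) =ᶠ[𝓝 p] (fun q => fderiv ℝ g q v) :=
    fun v => h1.mono fun q hq => by show fderiv ℝ f q v = fderiv ℝ g q v; rw [hq]
  show fderiv ℝ (fun q => fderiv ℝ f q (1, 0)) p (1, 0)
      + fderiv ℝ (fun q => fderiv ℝ f q (0, 1)) p (0, 1)
      = fderiv ℝ (fun q => fderiv ℝ g q (1, 0)) p (1, 0)
      + fderiv ℝ (fun q => fderiv ℝ g q (0, 1)) p (0, 1)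
  rw [(h2 (1, 0)).fderiv_eq, (h2 (0, 1)).fderiv_eq]

private lemma lap_sub_const (f : ℝ × ℝ → ℝ) (c : ℝ) (p : ℝ × ℝ) :
    lap (fun q => f q - c) p = lap f p := by
  show fderiv ℝ (fun q => fderiv ℝ (fun x => f x - c) q (1, 0)) p (1, 0)
      + fderiv ℝ (fun q => fderiv ℝ (fun x => f x - c) q (0, 1)) p (0, 1)
      = fderiv ℝ (fun q => fderiv ℝ f q (1, 0)) p (1, 0)
      + fderiv ℝ (fun q => fderiv ℝ f q (0, 1)) p (0, 1)
  simp only [fderiv_sub_const]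

theorem stmt1 (U : Set (ℝ × ℝ)) (hU : IsOpen U) (F : ℝ × ℝ → ℂ)
    (hF : ContDiffOn ℝ 2 F U)
    (heq : ∀ p ∈ U, lap F p = 2 * Complex.exp (F p))
    (α : ℝ × ℝ → ℂ) (hα : ∀ p, α p = Complex.exp (F p))
    (K κ : ℝ × ℝ → ℝ)
    (hK : ∀ p, K p = ‖α p‖ * (α p).re)
    (hκ : ∀ p, κ p = ‖α p‖ * (α p).im) :
    ∀ p ∈ U, (α p).re ≠ 0 →
      (K p ^ 2 + κ p ^ 2) ^ ((1 : ℝ) / 4) *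
          lap (fun q => (1 / 4) * Real.log (K q ^ 2 + κ q ^ 2)) p = 2 * K p ∧
      (K p ^ 2 + κ p ^ 2) ^ ((1 : ℝ) / 4) *
          lap (fun q => Real.arctan (κ q / K q)) p = 2 * κ p := by
  intro p hp hre
  have hUnhds : U ∈ 𝓝 p := hU.mem_nhds hp
  have hdF : ∀ q ∈ U, DifferentiableAt ℝ F q := fun q hq =>
    (hF.differentiableOn two_ne_zero).differentiableAt (hU.mem_nhds hq)
  have hd1 : ∀ᶠ q in 𝓝 p, DifferentiableAt ℝ F q :=
    Filter.eventually_of_mem hUnhds fun q hq => hdF q hq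
  have hd2 : DifferentiableAt ℝ (fderiv ℝ F) p :=
    (((hF.fderiv_of_isOpen hU (m := 1) (by norm_num)).differentiableOn one_ne_zero)).differentiableAt hUnhds
  -- basic identities
  have habs : ∀ q, ‖α q‖ = Real.exp (F q).re := by
    intro q; rw [hα, Complex.norm_exp]
  have hsum : ∀ q, K q ^ 2 + κ q ^ 2 = Real.exp (4 * (F q).re) := by
    intro q
    have h1 : (α q).re ^ 2 + (α q).im ^ 2 = (‖α q‖) ^ 2 := by
      rw [Complex.sq_norm, Complex.normSq_apply]; ring
    have : K q ^ 2 + κ q ^ 2 = ‖α q‖ ^ 2 * ((α q).re ^ 2 + (α q).im ^ 2) := by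
      rw [hK, hκ]; ring
    rw [this, h1, habs,
      show (4 : ℝ) * (F q).re = (F q).re + (F q).re + ((F q).re + (F q).re) by ring,
      Real.exp_add, Real.exp_add]
    ring
  have hreim : ∀ q, (α q).re = Real.exp (F q).re * Real.cos (F q).im ∧
      (α q).im = Real.exp (F q).re * Real.sin (F q).im := by
    intro q; rw [hα]; exact ⟨Complex.exp_re _, Complex.exp_im _⟩
  -- coefficient
  have hcoef : (K p ^ 2 + κ p ^ 2) ^ ((1 : ℝ) / 4) = Real.exp (F p).re := by
    rw [hsum p, ← Real.exp_mul]
    congr 1; ring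
  -- lap of re/im parts
  have hlapre : lap (fun q => (F q).re) p = (lap F p).re := by
    have := lap_clm Complex.reCLM F p hd1 hd2
    simpa using this
  have hlapim : lap (fun q => (F q).im) p = (lap F p).im := by
    have := lap_clm Complex.imCLM F p hd1 hd2
    simpa using this
  have hlapF := heq p hp
  have hFre : (lap F p).re = 2 * (Real.exp (F p).re * Real.cos (F p).im) := by
    rw [hlapF]
    simp [Complex.exp_re]
  have hFim : (lap F p).im = 2 * (Real.exp (F p).re * Real.sin (F p).im) := by
    rw [hlapF]
    simp [Complex.exp_im]
  constructor
  · -- first equation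
    have hfun1 : (fun q => (1 / 4 : ℝ) * Real.log (K q ^ 2 + κ q ^ 2))
        = fun q => (F q).re := by
      funext q
      rw [hsum q, Real.log_exp]; ring
    rw [hfun1, hlapre, hcoef, hFre, hK, habs, (hreim p).1]
    ring
  · -- second equation
    have hcosp : Real.cos (F p).im ≠ 0 := by
      intro h0
      apply hre
      rw [(hreim p).1, h0, mul_zero]
    set n : ℤ := round ((F p).im / Real.pi) with hn
    have hπ : (0 : ℝ) < Real.pi := Real.pi_pos
    have hball : |(F p).im - n * Real.pi| ≤ Real.pi / 2 := by
      have h1 : |(F p).im / Real.pi - n| ≤ 1 / 2 := abs_sub_round _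
      have h3 : ((F p).im / Real.pi - n) * Real.pi = (F p).im - n * Real.pi := by
        field_simp
      calc |(F p).im - n * Real.pi| = |((F p).im / Real.pi - n) * Real.pi| := by rw [h3]
        _ = |(F p).im / Real.pi - n| * |Real.pi| := abs_mul _ _
        _ = |(F p).im / Real.pi - n| * Real.pi := by rw [abs_of_pos hπ]
        _ ≤ (1 / 2) * Real.pi := mul_le_mul_of_nonneg_right h1 hπ.le
        _ = Real.pi / 2 := by ring
    have hne : (F p).im - n * Real.pi ≠ Real.pi / 2 ∧
        (F p).im - n * Real.pi ≠ -(Real.pi / 2) := by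
      constructor <;> intro h0 <;> apply hcosp
      · have : (F p).im = Real.pi / 2 + n * Real.pi := by linarith [sub_eq_iff_eq_add.mp h0]
        rw [this, Real.cos_add, Real.cos_pi_div_two, Real.sin_pi_div_two, Real.sin_int_mul_pi]
        ring
      · have : (F p).im = -(Real.pi / 2) + n * Real.pi := by linarith [sub_eq_iff_eq_add.mp h0]
        rw [this, Real.cos_add, Real.cos_neg, Real.sin_neg, Real.cos_pi_div_two,
          Real.sin_pi_div_two, Real.sin_int_mul_pi]
        ring
    have hmem : (F p).im ∈ Set.Ioo ((n : ℝ) * Real.pi - Real.pi / 2)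
        ((n : ℝ) * Real.pi + Real.pi / 2) := by
      rcases abs_le.mp hball with ⟨hl, hr⟩
      constructor
      · rcases lt_or_eq_of_le hl with h | h
        · linarith
        · exact absurd h.symm hne.2
      · rcases lt_or_eq_of_le hr with h | h
        · linarith
        · exact absurd h hne.1
    -- the open set V
    have hcontim : ContinuousOn (fun q => (F q).im) U :=
      Complex.continuous_im.comp_continuousOn hF.continuousOn
    have hVopen : IsOpen (U ∩ (fun q => (F q).im) ⁻¹'
        Set.Ioo ((n : ℝ) * Real.pi - Real.pi / 2) ((n : ℝ) * Real.pi + Real.pi / 2)) :=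
      hcontim.isOpen_inter_preimage hU isOpen_Ioo
    have hpV : p ∈ U ∩ (fun q => (F q).im) ⁻¹'
        Set.Ioo ((n : ℝ) * Real.pi - Real.pi / 2) ((n : ℝ) * Real.pi + Real.pi / 2) :=
      ⟨hp, hmem⟩
    have hVeq : ∀ q ∈ U ∩ (fun q => (F q).im) ⁻¹'
        Set.Ioo ((n : ℝ) * Real.pi - Real.pi / 2) ((n : ℝ) * Real.pi + Real.pi / 2),
        Real.arctan (κ q / K q) = (F q).im - n * Real.pi := by
      rintro q ⟨-, hq2⟩
      have hexp : Real.exp (F q).re ≠ 0 := (Real.exp_pos _).ne'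
      have hdiv : κ q / K q = Real.sin (F q).im / Real.cos (F q).im := by
        rw [hK, hκ, (hreim q).1, (hreim q).2, habs]
        rw [show Real.exp (F q).re * (Real.exp (F q).re * Real.sin (F q).im)
            = (Real.exp (F q).re * Real.exp (F q).re) * Real.sin (F q).im by ring,
          show Real.exp (F q).re * (Real.exp (F q).re * Real.cos (F q).im)
            = (Real.exp (F q).re * Real.exp (F q).re) * Real.cos (F q).im by ring,
          mul_div_mul_left _ _ (mul_ne_zero hexp hexp)]
      have htan : Real.sin (F q).im / Real.cos (F q).im
          = Real.tan ((F q).im - n * Real.pi) := by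
        rw [Real.tan_periodic.sub_int_mul_eq n, Real.tan_eq_sin_div_cos]
      rw [hdiv, htan, Real.arctan_tan]
      · rcases hq2 with ⟨h1, h2⟩; linarith
      · rcases hq2 with ⟨h1, h2⟩; linarith
    have hev : (fun q => Real.arctan (κ q / K q))
        =ᶠ[𝓝 p] fun q => (F q).im - (n : ℝ) * Real.pi :=
      Filter.eventually_of_mem (hVopen.mem_nhds hpV) hVeq
    rw [lap_congr hev, lap_sub_const, hlapim, hcoef, hFim, hκ, habs, (hreim p).2]
    ring
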